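/- Let α, c > 0 be constants, let A ⊆ [n] with |A| = αn, and let x ∈ {0,1}^n. Let (1-ε')αn ≤ i ≤ αn with 0 < ε' < 1 and ε'n ≥ 2ec. Define rk(z) := |{j ∈ A : z_j = 1}|, and let y be obtained from x by standard bit mutation with rate c/n. If rk(x) < i, then at least one of the following two inequalities holds: Pr[rk(y) ≥ i] ≤ 2^{-ε'αn}, or Pr[rk(y) ≥ i+1] / Pr[rk(y) ≥ i] ≤ 2ε'αc. -/

import Mathlib

open MeasureTheory
open scoped ENNReal NNReal

namespace EA

attribute [local instance] Classical.propDecidable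

/-- A search point: a bit string of length `n`. -/
abbrev Pt (n : ℕ) := Fin n → Bool

/-- Number of one-bits of `x` inside the index set `A`. -/
def onesIn {n : ℕ} (A : Finset (Fin n)) (x : Pt n) : ℕ :=
  (A.filter fun i => x i = true).card

/-- Number of zero-bits of `x` inside the index set `A`. -/
def zerosIn {n : ℕ} (A : Finset (Fin n)) (x : Pt n) : ℕ :=
  (A.filter fun i => x i = false).card

/-- The OneMax value: the number of one-bits. -/
def OM {n : ℕ} (x : Pt n) : ℕ := onesIn Finset.univ x

/-- Density `d(A, x)` of zero-bits of `x` in `A`. -/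
noncomputable def dens {n : ℕ} (A : Finset (Fin n)) (x : Pt n) : ℝ :=
  (zerosIn A x : ℝ) / (A.card : ℝ)

/-- Hamming distance: the number of bits in which `x` and `y` differ. -/
def hamming {n : ℕ} (x y : Pt n) : ℕ :=
  (Finset.univ.filter fun i : Fin n => x i ≠ y i).card

/-! ### Mutation as a probability mass function -/

/-- Bernoulli distribution with parameter `min p 1`. -/
noncomputable def bern (p : ℝ≥0∞) : PMF Bool := PMF.bernoulli (min p 1).toNNReal
  (by simpa using ENNReal.toNNReal_mono ENNReal.one_ne_top (min_le_right p 1))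

/-- Product of `k` independent Bernoulli random bits. -/
noncomputable def piBern : (k : ℕ) → ℝ≥0∞ → PMF (Fin k → Bool)
  | 0, _ => PMF.pure fun i => i.elim0
  | k + 1, p => (bern p).bind fun b => (piBern k p).map (Fin.cons b)

/-- Standard bit mutation with rate `c/n`: each bit of `x` is flipped independently
with probability `c/n`. -/
noncomputable def mutPMF (n : ℕ) (c : ℝ) (x : Pt n) : PMF (Pt n) :=
  (piBern n (ENNReal.ofReal (c / n))).map fun b i => xor (x i) (b i)

/-- The result of `d` consecutive independent standard bit mutations started at `x`. -/
noncomputable def mutChain (n : ℕ) (c : ℝ) : ℕ → Pt n → PMF (Pt n)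
  | 0, x => PMF.pure x
  | d + 1, x => (mutPMF n c x).bind (mutChain n c d)

/-! ### The random forest `F'` (and a single tree of it), as a Markov chain of PMFs.

A forest state is a list of vertices in order of creation; entry `some j` means the vertex
is a child of vertex `j`, and `none` means the vertex is a root. -/

/-- One round of the forest process: each existing vertex independently spawns a child with
probability `1/μ`, and one new root is added. -/
noncomputable def forestStep (μ : ℕ) (s : List (Option ℕ)) : PMF (List (Option ℕ)) :=
  (piBern s.length ((μ : ℝ≥0∞))⁻¹).map fun b =>
    s ++ (((List.finRange s.length).filter fun i => b i).map fun i => some i.1) ++ [none]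

/-- The random forest `F'`: in round `0` a single root; in each subsequent round each vertex
spawns a child with probability `1/μ` and a new root is added. -/
noncomputable def forestPMF (μ : ℕ) : ℕ → PMF (List (Option ℕ))
  | 0 => PMF.pure [none]
  | t + 1 => (forestPMF μ t).bind (forestStep μ)

/-- One round of the single-tree process: each existing vertex independently spawns a child
with probability `1/μ` (no new roots). -/
noncomputable def treeStep (μ : ℕ) (s : List (Option ℕ)) : PMF (List (Option ℕ)) :=
  (piBern s.length ((μ : ℝ≥0∞))⁻¹).map fun b =>
    s ++ (((List.finRange s.length).filter fun i => b i).map fun i => some i.1)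

/-- A single tree of the random forest `F'`. -/
noncomputable def treePMF (μ : ℕ) : ℕ → PMF (List (Option ℕ))
  | 0 => PMF.pure [none]
  | t + 1 => (treePMF μ t).bind (treeStep μ)

/-- Depth of vertex `i` in a forest state (with fuel). -/
def depthL (s : List (Option ℕ)) : ℕ → ℕ → ℕ
  | 0, _ => 0
  | fuel + 1, i =>
    match s.getD i none with
    | none => 0
    | some j => depthL s fuel j + 1

/-- Depth of vertex `i` in a forest state. -/
def depthOf (s : List (Option ℕ)) (i : ℕ) : ℕ := depthL s (i + 1) i

/-- The number of vertices of depth `d` in a forest state. -/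
def countDepth (s : List (Option ℕ)) (d : ℕ) : ℕ :=
  ((List.range s.length).filter fun i => depthOf s i == d).length

/-! ### The source of randomness.

The sample space is the interval `[0,1)` with Lebesgue measure; all the randomness used by the
algorithm is extracted from the binary digits of the sample `u ∈ [0,1)`, re-packaged into a
countable family of independent uniform random variables `unif u m ∈ [0,1)`. -/

/-- The `k`-th binary digit of `u ∈ [0,1)`. -/
noncomputable def bit (u : ℝ) (k : ℕ) : Bool := decide (⌊u * 2 ^ (k + 1)⌋₊ % 2 = 1)

/-- A countable family of independent uniform-`[0,1)` random variables extracted from the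
binary digits of `u`. -/
noncomputable def unif (u : ℝ) (m : ℕ) : ℝ :=
  ∑' k : ℕ, if bit u (Nat.pair m k) then ((1 : ℝ) / 2 ^ (k + 1)) else 0

/-- Independent uniforms, triple-indexed. -/
noncomputable def unifAt (u : ℝ) (a b c : ℕ) : ℝ := unif u (Nat.pair a (Nat.pair b c))

/-- The underlying probability measure: Lebesgue measure on `[0,1)`. -/
noncomputable def P : Measure ℝ := volume.restrict (Set.Ico (0 : ℝ) 1)

/-- A uniformly random element of `{0, ..., m-1}` obtained from a uniform `r ∈ [0,1)`. -/
noncomputable def pickN (r : ℝ) (m : ℕ) : ℕ := min ⌊r * m⌋₊ (m - 1)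

/-! ### The (μ+1)-EA -/

/-- A vertex (individual) identifier: `Sum.inl j` is the initial individual in slot `j`,
`Sum.inr t` is the offspring created in round `t`. -/
abbrev V := ℕ ⊕ ℕ

/-- Creation time of a vertex (used as recursion fuel). -/
def vtime : V → ℕ
  | Sum.inl _ => 0
  | Sum.inr t => t + 1

/-- Configuration of a run of the `(μ+1)`-EA on bit strings of length `n`: population size `μ`,
mutation parameter `c` (mutation rate `c/n`), fitness function `f`, initial population `pop₀`
(only slots `< μ` are relevant), and the distinguished set `A` (the current "hot topic")
defining the rank `rk x = onesIn A x`. -/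
structure Cfg (n : ℕ) where
  μ : ℕ
  c : ℝ
  f : Pt n → ℝ
  pop₀ : ℕ → Pt n
  A : Finset (Fin n)

namespace Cfg

variable {n : ℕ} (C : Cfg n)

/-- Rank of a search point: number of one-bits in `A`. -/
def rk (x : Pt n) : ℕ := onesIn C.A x

/-- Index of the parent selected (uniformly at random) in round `t`. -/
noncomputable def parentIdx (u : ℝ) (t : ℕ) : ℕ := pickN (unifAt u 0 t 0) C.μ

/-- Standard bit mutation performed in round `t`: each bit flips independently with
probability `c/n`. -/
noncomputable def mutate (u : ℝ) (t : ℕ) (x : Pt n) : Pt n :=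
  fun i => xor (x i) (decide (unifAt u 1 t i.1 < C.c / n))

/-- The `μ+1` candidates in round `t` (index `μ` is the new offspring), given state `s`. -/
noncomputable def cands (u : ℝ) (t : ℕ) (s : ℕ → Pt n × V) : ℕ → Pt n × V :=
  fun j => if j < C.μ then s j else (C.mutate u t (s (C.parentIdx u t)).1, Sum.inr t)

/-- The index (among the `μ+1` candidates) of the removed individual in round `t`:
an individual of minimal fitness, ties broken uniformly at random. -/
noncomputable def removedIdx (u : ℝ) (t : ℕ) (s : ℕ → Pt n × V) : ℕ :=
  let g := C.cands u t s
  let M := (Finset.range (C.μ + 1)).filter fun j =>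
    ∀ j' ∈ Finset.range (C.μ + 1), C.f (g j).1 ≤ C.f (g j').1
  (M.sort (· ≤ ·)).getD (pickN (unifAt u 2 t 0) M.card) 0

/-- One round of the `(μ+1)`-EA. -/
noncomputable def stepRun (u : ℝ) (t : ℕ) (s : ℕ → Pt n × V) : ℕ → Pt n × V :=
  fun j => if j = C.removedIdx u t s then C.cands u t s C.μ else s j

/-- The population (with origins of the individuals) after `t` rounds. -/
noncomputable def run (u : ℝ) : ℕ → ℕ → Pt n × V
  | 0 => fun j => (C.pop₀ j, Sum.inl j)
  | t + 1 => C.stepRun u t (run u t)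

/-- The parent (search point together with its origin vertex) selected in round `t`. -/
noncomputable def parentAt (u : ℝ) (t : ℕ) : Pt n × V := C.run u t (C.parentIdx u t)

/-- The offspring created in round `t`. -/
noncomputable def offspringAt (u : ℝ) (t : ℕ) : Pt n := C.mutate u t (C.parentAt u t).1

/-- The search point removed from the population in round `t`. -/
noncomputable def removedAt (u : ℝ) (t : ℕ) : Pt n :=
  (C.cands u t (C.run u t) (C.removedIdx u t (C.run u t))).1

/-- The search point associated with a vertex. -/
noncomputable def vpt (u : ℝ) : V → Pt n
  | Sum.inl j => C.pop₀ j
  | Sum.inr t => C.offspringAt u t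

/-- The parent vertex of a vertex (`none` for initial individuals). -/
noncomputable def vparent (u : ℝ) : V → Option V
  | Sum.inl _ => none
  | Sum.inr t => some (C.parentAt u t).2

/-- Whether a vertex identifier denotes an actual individual of the run. -/
def validV : V → Prop
  | Sum.inl j => j < C.μ
  | Sum.inr _ => True

/-- Auxiliary: follow parent pointers while the parent has rank at least `i`. -/
noncomputable def rootAux (u : ℝ) (i : ℕ) : ℕ → V → V
  | 0, v => v
  | fuel + 1, v =>
    match C.vparent u v with
    | none => v
    | some w => if i ≤ C.rk (C.vpt u w) then rootAux u i fuel w else v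

/-- The root, in the family forest `F_i`, of the tree containing vertex `v`. -/
noncomputable def rootIn (u : ℝ) (i : ℕ) (v : V) : V := C.rootAux u i (vtime v) v

/-- Auxiliary: depth with fuel. -/
noncomputable def depthAux (u : ℝ) (i : ℕ) : ℕ → V → ℕ
  | 0, _ => 0
  | fuel + 1, v =>
    match C.vparent u v with
    | none => 0
    | some w => if i ≤ C.rk (C.vpt u w) then depthAux u i fuel w + 1 else 0

/-- The depth of vertex `v` in the family forest `F_i` (roots have depth `0`). -/
noncomputable def depthIn (u : ℝ) (i : ℕ) (v : V) : ℕ := C.depthAux u i (vtime v) v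

/-- Whether vertex `v` is a root of the family forest `F_i`: it has rank at least `i` and
either no parent or a parent of rank less than `i`. -/
def isRootIn (u : ℝ) (i : ℕ) (v : V) : Prop :=
  i ≤ C.rk (C.vpt u v) ∧ (C.vparent u v).elim True fun w => C.rk (C.vpt u w) < i

/-- The number of individuals of rank at least `i` among initial individuals and the
offspring of the first `t` rounds (i.e. `|X_{≥ i}|` after `t` rounds). -/
noncomputable def numGe (u : ℝ) (i : ℕ) (t : ℕ) : ℕ :=
  ((Finset.range C.μ).filter fun j => i ≤ C.rk (C.pop₀ j)).card +
  ((Finset.range t).filter fun s => i ≤ C.rk (C.offspringAt u s)).card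

end Cfg

/-- The first time (possibly `⊤`) at which a predicate on rounds holds. -/
noncomputable def hitTime (p : ℕ → Prop) : ℕ∞ :=
  sInf {m : ℕ∞ | ∃ t : ℕ, m = t ∧ p t}

namespace Cfg

variable {n : ℕ} (C : Cfg n)

/-- The first round at which `X_{≥i}` is nonempty. -/
noncomputable def tFirst (u : ℝ) (i : ℕ) : ℕ∞ :=
  hitTime fun t => 1 ≤ C.numGe u i t

/-- The first round at which `|X_{≥i}|` reaches `x`. -/
noncomputable def tReach (u : ℝ) (i : ℕ) (x : ℝ) : ℕ∞ :=
  hitTime fun t => x ≤ (C.numGe u i t : ℝ)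

/-- `T^κ`: the number of rounds until `|X_{≥ i}|` reaches `μ^κ` after the first point of
`X_{≥ i}` is visited. -/
noncomputable def Tkappa (u : ℝ) (i : ℕ) (κ : ℝ) : ℕ∞ :=
  C.tReach u i ((C.μ : ℝ) ^ κ) - C.tFirst u i

/-- `t_i`: the first round at which an individual of rank at least `i` exists. -/
noncomputable def tBirth (u : ℝ) (i : ℕ) : ℕ∞ := C.tFirst u i

/-- `T_i`: the round at which the last individual of rank at most `i` is eliminated, i.e. the
first round at which the whole population has rank larger than `i`. -/
noncomputable def tDie (u : ℝ) (i : ℕ) : ℕ∞ :=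
  hitTime fun t => ∀ j < C.μ, i < C.rk ((C.run u t j).1)

/-- The last round at which an individual of rank `i` is removed from the population. -/
noncomputable def lastDelTime (u : ℝ) (i : ℕ) : ℕ :=
  sSup {t : ℕ | C.rk (C.removedAt u t) = i}

/-- `Z_i`: the OneMax value of the last search point of rank `i` that the algorithm deletes
from its population (with `Z_i := Z_{i-1}` if no such point exists). -/
noncomputable def Z (u : ℝ) : ℕ → ℕ
  | 0 =>
    if ({t : ℕ | C.rk (C.removedAt u t) = 0}).Nonempty then
      OM (C.removedAt u (C.lastDelTime u 0))
    else 0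
  | i + 1 =>
    if ({t : ℕ | C.rk (C.removedAt u t) = i + 1}).Nonempty then
      OM (C.removedAt u (C.lastDelTime u (i + 1)))
    else Z u i

/-- Event `E_a`: no individual of rank at most `i-1` creates an offspring of rank at
least `i+1`. -/
def Ea (u : ℝ) (i : ℕ) : Prop :=
  ∀ t : ℕ, C.rk (C.parentAt u t).1 < i → C.rk (C.offspringAt u t) < i + 1

/-- The number of roots of the family forest `F_i`. -/
noncomputable def rootsCount (u : ℝ) (i : ℕ) : ℕ :=
  {v : V | C.validV v ∧ C.isRootIn u i v}.ncard

/-- Event `E_b`: there are at most `ε μ log³ μ` roots in `F_i`. -/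
def Eb (u : ℝ) (i : ℕ) (ε : ℝ) : Prop :=
  (C.rootsCount u i : ℝ) ≤ ε * C.μ * (Real.log C.μ) ^ 3

/-- Event `E_c`: no vertex of rank exactly `i` of depth at most `φ log μ` in `F_i` creates an
offspring of rank larger than `i`. -/
def Ec (u : ℝ) (i : ℕ) (φ : ℝ) : Prop :=
  ∀ t : ℕ, C.rk (C.parentAt u t).1 = i →
    (C.depthIn u i (C.parentAt u t).2 : ℝ) ≤ φ * Real.log C.μ →
    C.rk (C.offspringAt u t) ≤ i

/-- Event `E_d`: every vertex of rank `i` creating an offspring of rank at least `i+1` has a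
OneMax value at least `c_d log μ` below that of its root (if the root has OneMax value at least
`(1-8ε)n`), resp. OneMax value at most `(1-4ε)n` (if the root has OneMax value at most
`(1-8ε)n`); moreover the improving mutation changes at most `(c_d/2) log μ` bits. -/
def Ed (u : ℝ) (i : ℕ) (ε c_d : ℝ) : Prop :=
  ∀ t : ℕ, C.rk (C.parentAt u t).1 = i → i + 1 ≤ C.rk (C.offspringAt u t) →
    (((1 - 8 * ε) * n ≤ (OM (C.vpt u (C.rootIn u i (C.parentAt u t).2)) : ℝ) →
        (OM ((C.parentAt u t).1) : ℝ) ≤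
          (OM (C.vpt u (C.rootIn u i (C.parentAt u t).2)) : ℝ) - c_d * Real.log C.μ) ∧
      ((OM (C.vpt u (C.rootIn u i (C.parentAt u t).2)) : ℝ) ≤ (1 - 8 * ε) * n →
        (OM ((C.parentAt u t).1) : ℝ) ≤ (1 - 4 * ε) * n) ∧
      (hamming ((C.parentAt u t).1) (C.offspringAt u t) : ℝ) ≤ c_d / 2 * Real.log C.μ)

/-- Event `E_e`: no vertex of rank `i` has a OneMax value exceeding that of its root in `F_i`
by more than `c_e log μ`. -/
def Ee (u : ℝ) (i : ℕ) (c_e : ℝ) : Prop :=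
  ∀ v : V, C.validV v → C.rk (C.vpt u v) = i →
    (OM (C.vpt u v) : ℝ) ≤ (OM (C.vpt u (C.rootIn u i v)) : ℝ) + c_e * Real.log C.μ

/-- The good event `E_good(i) = E_a ∩ E_b ∩ E_c ∩ E_d ∩ E_e`. -/
def Egood (u : ℝ) (i : ℕ) (ε φ c_d c_e : ℝ) : Prop :=
  C.Ea u i ∧ C.Eb u i ε ∧ C.Ec u i φ ∧ C.Ed u i ε c_d ∧ C.Ee u i c_e

/-- The vertices of the family forest `F_i` present after `t` rounds, in creation order. -/
noncomputable def famVerts (u : ℝ) (i : ℕ) (t : ℕ) : List V :=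
  ((List.range C.μ).filter fun j => decide (i ≤ C.rk (C.pop₀ j))).map Sum.inl ++
  ((List.range t).filter fun s => decide (i ≤ C.rk (C.offspringAt u s))).map Sum.inr

/-- The family forest `F_i` after `t` rounds, as a list of parent pointers (in creation
order); `none` denotes a root. -/
noncomputable def famForest (u : ℝ) (i : ℕ) (t : ℕ) : List (Option ℕ) :=
  (C.famVerts u i t).map fun v =>
    match v with
    | Sum.inl _ => none
    | Sum.inr s =>
      if i ≤ C.rk (C.vpt u (C.parentAt u s).2) then
        some ((C.famVerts u i t).idxOf (C.parentAt u s).2)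
      else none

/-- The number of fitness function evaluations before the first evaluation of the all-ones
string (evaluations `0, ..., μ-1` are the initial population, evaluation `μ + t` is the
offspring of round `t`). -/
noncomputable def Topt (u : ℝ) : ℕ∞ :=
  hitTime fun k =>
    (k < C.μ ∧ C.pop₀ k = fun _ => true) ∨
    (C.μ ≤ k ∧ C.offspringAt u (k - C.μ) = fun _ => true)

end Cfg

/-- The trajectory of the random forest `F'`, driven by the uniform randomness of `u`
(tag `6`): round `0` has a single root; in each round each existing vertex spawns a child
with probability `1/μ` and a new root is added. -/
noncomputable def forestTraj (μ : ℕ) (u : ℝ) : ℕ → List (Option ℕ)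
  | 0 => [none]
  | t + 1 =>
    let s := forestTraj μ u t
    s ++ ((List.range s.length).filter fun k => decide (unifAt u 6 t k < 1 / (μ : ℝ))).map some
      ++ [none]

/-- `F` is contained in `G` as a subforest: there is an injection of the vertices of `F` into
those of `G` preserving the root/parent structure. -/
def IsSubforest (F G : List (Option ℕ)) : Prop :=
  ∃ ι : ℕ → ℕ,
    (∀ v < F.length, ι v < G.length) ∧
    (∀ v < F.length, ∀ w < F.length, ι v = ι w → v = w) ∧
    (∀ v < F.length, (F.getD v none).map ι = G.getD (ι v) none)

/-- The uniformly random initial population (tag `3`). -/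
noncomputable def initU (n : ℕ) (u : ℝ) : ℕ → Pt n :=
  fun j i => decide (unifAt u 3 j i.1 < (1 : ℝ) / 2)

/-- The linear auxiliary function `f_ℓ(x) = n · Σ_{j ∈ A} x_j + Σ_{j ∉ A} x_j`. -/
noncomputable def fL (n : ℕ) (A : Finset (Fin n)) : Pt n → ℝ :=
  fun x => (n : ℝ) * (onesIn A x : ℝ) + (onesIn Aᶜ x : ℝ)

/-- The standard `(μ+1)`-EA configuration on the linear function `f_ℓ` determined by the
hot topic `A`, with uniformly random initial population. -/
noncomputable def eaL (n μ : ℕ) (c : ℝ) (A : Finset (Fin n)) (u : ℝ) : Cfg n :=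
  ⟨μ, c, fL n A, initU n u, A⟩

/-- As `eaL`, but with prescribed initial population `pop₀`. -/
noncomputable def eaLFrom (n μ : ℕ) (c : ℝ) (A : Finset (Fin n)) (pop₀ : ℕ → Pt n) : Cfg n :=
  ⟨μ, c, fL n A, pop₀, A⟩

/-! ### The HotTopic function -/

section HT

variable (n L : ℕ) (ε : ℝ) (A B : ℕ → Finset (Fin n))

/-- The level `ℓ(x) = max {ℓ' ∈ [L] : d(B_{ℓ'}, x) ≤ ε}` (and `0` if no such `ℓ'` exists). -/
noncomputable def levelHT (x : Pt n) : ℕ :=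
  ((Finset.Icc 1 L).filter fun l => dens (B l) x ≤ ε).sup id

/-- Extension of the sets `A_l` by `A_{L+1} := ∅`. -/
def AextHT (l : ℕ) : Finset (Fin n) := if l ≤ L then A l else ∅

/-- The HotTopic function
`HT(x) = ℓ(x) n² + n Σ_{i ∈ A_{ℓ(x)+1}} x_i + Σ_{i ∈ R_{ℓ(x)+1}} x_i`. -/
noncomputable def HTf (x : Pt n) : ℕ :=
  levelHT n L ε B x * n ^ 2 +
    n * onesIn (AextHT n L A (levelHT n L ε B x + 1)) x +
    onesIn (AextHT n L A (levelHT n L ε B x + 1))ᶜ x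

end HT

/-- A uniformly random element of a list (given a uniform `r ∈ [0,1)`). -/
noncomputable def pickFromList {γ : Type*} [Inhabited γ] (l : List γ) (r : ℝ) : γ :=
  l.getD (pickN r l.length) default

/-- The random set `A_l`: a uniformly random subset of `[n]` of size `a` (tag `4`). -/
noncomputable def randA (n : ℕ) (a : ℕ) (u : ℝ) (l : ℕ) : Finset (Fin n) :=
  pickFromList ((Finset.univ.powersetCard a : Finset (Finset (Fin n))).toList) (unifAt u 4 l 0)

/-- The random set `B_l`: a uniformly random subset of `A_l` of size `b` (tag `5`). -/
noncomputable def randB (n : ℕ) (b : ℕ) (u : ℝ) (Al : Finset (Fin n)) (l : ℕ) : Finset (Fin n) :=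
  pickFromList ((Al.powersetCard b).toList) (unifAt u 5 l 0)

end EA


open MeasureTheory
open scoped ENNReal

namespace RJ
open EA
attribute [local instance] Classical.propDecidable

lemma piBern_apply (k : ℕ) (p : ℝ≥0∞) (b : Fin k → Bool) :
    piBern k p b = ∏ i, bern p (b i) := by
  induction k with
  | zero =>
    rw [Subsingleton.elim b (fun i => i.elim0)]
    simp [piBern, PMF.pure_apply]
  | succ k ih =>
    have hmap : ∀ a : Bool, (PMF.map (Fin.cons a) (piBern k p)) b
        = if b 0 = a then piBern k p (Fin.tail b) else 0 := by
      intro a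
      rw [PMF.map_apply]
      rw [tsum_eq_single (Fin.tail b)]
      · by_cases h : b 0 = a
        · rw [if_pos h, if_pos]
          conv_lhs => rw [← Fin.cons_self_tail b, h]
        · rw [if_neg, if_neg h]
          intro hb
          exact h (by rw [hb]; simp)
      · intro z hz
        rw [if_neg]
        intro hb
        exact hz (by rw [hb]; simp [Fin.tail_cons])
    show ((bern p).bind fun a => (piBern k p).map (Fin.cons a)) b = _
    rw [PMF.bind_apply, tsum_eq_single (b 0)]
    · rw [hmap, if_pos rfl, Fin.prod_univ_succ]
      rw [ih]
      rfl
    · intro a ha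
      rw [hmap, if_neg (fun h => ha h.symm), mul_zero]

lemma bern_apply (p : ℝ≥0∞) (b : Bool) :
    bern p b = if b then min p 1 else 1 - min p 1 := by
  have hp : ((min p 1).toNNReal : ℝ≥0∞) = min p 1 :=
    ENNReal.coe_toNNReal (ne_top_of_le_ne_top ENNReal.one_ne_top (min_le_right p 1))
  cases b <;> simp only [bern, PMF.bernoulli, PMF.ofFintype_apply, cond_true, cond_false, Bool.false_eq_true, if_true, if_false,
    ↓reduceIte, ENNReal.coe_sub, ENNReal.coe_one, hp]

lemma mutPMF_apply {n : ℕ} (c : ℝ) (x y : Pt n) :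
    (mutPMF n c x) y
      = ∏ i : Fin n, (if y i = x i then 1 - min (ENNReal.ofReal (c / n)) 1
          else min (ENNReal.ofReal (c / n)) 1) := by
  set p := ENNReal.ofReal (c / n)
  show (PMF.map _ (piBern n p)) y = _
  rw [PMF.map_apply, tsum_eq_single (fun i => xor (x i) (y i))]
  · rw [if_pos (by funext i; cases hx : x i <;> cases hy : y i <;> simp [hx, hy]), piBern_apply]
    refine Finset.prod_congr rfl fun i _ => ?_
    rw [bern_apply]
    cases hx : x i <;> cases hy : y i <;> simp [hx, hy]
  · intro b hb
    rw [if_neg]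
    intro h
    apply hb
    funext i
    have := congrFun h i
    cases hb' : b i <;> cases hx : x i <;> simp_all

end RJ

namespace RJ
open EA Finset

attribute [local instance] Classical.propDecidable

variable {n : ℕ}

lemma toMeasure_eq_sum (P : PMF (Pt n)) (S : Set (Pt n)) :
    P.toMeasure S = ∑ y ∈ Finset.univ.filter (· ∈ S), P y := by
  classical
  rw [PMF.toMeasure_apply _ (S.toFinite.measurableSet), tsum_fintype, Finset.sum_filter]
  exact Finset.sum_congr rfl fun y _ => Set.indicator_apply S _ y

lemma onesIn_le_add_card (A : Finset (Fin n)) (x y : Pt n) :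
    onesIn A y ≤ onesIn A x + (A.filter fun j => x j = false ∧ y j = true).card := by
  have hsub : A.filter (fun i => y i = true) ⊆
      A.filter (fun i => x i = true) ∪ A.filter (fun j => x j = false ∧ y j = true) := by
    intro i hi
    simp only [mem_filter, mem_union] at hi ⊢
    cases hx : x i
    · exact Or.inr ⟨hi.1, rfl, hi.2⟩
    · exact Or.inl ⟨hi.1, rfl⟩
  calc onesIn A y ≤ _ := Finset.card_le_card hsub
    _ ≤ _ := Finset.card_union_le _ _

lemma onesIn_update_false (A : Finset (Fin n)) (y : Pt n) {j : Fin n} (hj : j ∈ A)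
    (hy : y j = true) : onesIn A (Function.update y j false) + 1 = onesIn A y := by
  have h1 : A.filter (fun i => y i = true)
      = insert j (A.filter fun i => Function.update y j false i = true) := by
    ext i
    simp only [mem_filter, mem_insert]
    by_cases h : i = j
    · subst h; simp [hy, hj]
    · simp [Function.update_of_ne h, h]
  have h2 : j ∉ (A.filter fun i => Function.update y j false i = true) := by
    simp [Function.update_self]
  unfold onesIn
  rw [h1, Finset.card_insert_of_notMem h2]

lemma flip_eq (c : ℝ) (x y : Pt n) (j : Fin n) (hne : y j ≠ x j) :
    (1 - min (ENNReal.ofReal (c / n)) 1) * (mutPMF n c x) y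
      = min (ENNReal.ofReal (c / n)) 1 * (mutPMF n c x) (Function.update y j (x j)) := by
  set q : ℝ≥0∞ := min (ENNReal.ofReal (c / n)) 1 with hq
  rw [mutPMF_apply, mutPMF_apply]
  rw [← Finset.prod_erase_mul _ _ (Finset.mem_univ j),
      ← Finset.prod_erase_mul _ _ (Finset.mem_univ j)]
  rw [if_neg hne, Function.update_self, if_pos rfl]
  have : ∀ i ∈ Finset.univ.erase j,
      (if Function.update y j (x j) i = x i then 1 - q else q)
        = (if y i = x i then 1 - q else q) := by
    intro i hi
    rw [Function.update_of_ne (Finset.mem_erase.1 hi).1]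
  rw [Finset.prod_congr rfl this]
  ring

/-- The key pairing inequality. -/
lemma inj_step (c : ℝ) (A : Finset (Fin n)) (x : Pt n) (r : ℕ) (hr : onesIn A x ≤ r) :
    ((r + 1 - onesIn A x : ℕ) : ℝ≥0∞) * (1 - min (ENNReal.ofReal (c / n)) 1) *
        ∑ y ∈ Finset.univ.filter (fun y : Pt n => r + 1 ≤ onesIn A y), (mutPMF n c x) y
      ≤ ((A.filter fun j => x j = false).card : ℝ≥0∞) * min (ENNReal.ofReal (c / n)) 1 *
        ∑ y ∈ Finset.univ.filter (fun y : Pt n => r ≤ onesIn A y), (mutPMF n c x) y := by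
  classical
  set q : ℝ≥0∞ := min (ENNReal.ofReal (c / n)) 1 with hq
  set f : Pt n → ℝ≥0∞ := fun y => (mutPMF n c x) y with hf
  set E1 : Finset (Pt n) := Finset.univ.filter (fun y : Pt n => r + 1 ≤ onesIn A y) with hE1
  set E0 : Finset (Pt n) := Finset.univ.filter (fun y : Pt n => r ≤ onesIn A y) with hE0
  set D : Pt n → Finset (Fin n) := fun y => A.filter (fun j => x j = false ∧ y j = true) with hD
  set Z : Pt n → Finset (Fin n) := fun y => A.filter (fun j => x j = false ∧ y j = false) with hZ
  -- step 1: termwise bound by card of D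
  have step1 : ((r + 1 - onesIn A x : ℕ) : ℝ≥0∞) * (1 - q) * ∑ y ∈ E1, f y
      ≤ ∑ y ∈ E1, ((D y).card : ℝ≥0∞) * ((1 - q) * f y) := by
    rw [Finset.mul_sum]
    refine Finset.sum_le_sum fun y hy => ?_
    rw [← mul_assoc]
    refine mul_le_mul_left (mul_le_mul_left (Nat.cast_le.2 ?_) _) _
    have hy' : r + 1 ≤ onesIn A y := (Finset.mem_filter.1 hy).2
    have h2 := onesIn_le_add_card A x y
    simp only [hD]
    omega
  -- step 2: rewrite as a sum over pairs and apply the bijection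
  have step2 : ∑ y ∈ E1, ((D y).card : ℝ≥0∞) * ((1 - q) * f y)
      = ∑ y ∈ E0, ((Z y).card : ℝ≥0∞) * (q * f y) := by
    have l1 : ∀ y, ((D y).card : ℝ≥0∞) * ((1 - q) * f y) = ∑ _j ∈ D y, (1 - q) * f y := by
      intro y; rw [Finset.sum_const, nsmul_eq_mul]
    have l2 : ∀ y, ((Z y).card : ℝ≥0∞) * (q * f y) = ∑ _j ∈ Z y, q * f y := by
      intro y; rw [Finset.sum_const, nsmul_eq_mul]
    simp only [l1, l2]
    rw [Finset.sum_sigma' E1 D (fun y _ => (1 - q) * f y),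
        Finset.sum_sigma' E0 Z (fun y _ => q * f y)]
    refine Finset.sum_bij' (fun a _ => ⟨Function.update a.1 a.2 false, a.2⟩)
      (fun a _ => ⟨Function.update a.1 a.2 true, a.2⟩) ?_ ?_ ?_ ?_ ?_
    · rintro ⟨y, j⟩ ha
      rw [Finset.mem_sigma] at ha
      obtain ⟨hy, hj⟩ := ha
      rw [hE1, Finset.mem_filter] at hy
      have hy' : r + 1 ≤ onesIn A y := hy.2
      simp only [hD, Finset.mem_filter] at hj
      obtain ⟨hjA, hjx, hjy⟩ := hj
      rw [Finset.mem_sigma]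
      refine ⟨?_, ?_⟩
      · show Function.update y j false ∈ E0
        rw [hE0, Finset.mem_filter]
        refine ⟨Finset.mem_univ _, ?_⟩
        have h2 := onesIn_update_false A y hjA hjy
        show r ≤ onesIn A (Function.update y j false)
        omega
      · show j ∈ Z (Function.update y j false)
        simp only [hZ, Finset.mem_filter]
        exact ⟨hjA, hjx, Function.update_self _ _ _⟩
    · rintro ⟨y, j⟩ ha
      rw [Finset.mem_sigma] at ha
      obtain ⟨hy, hj⟩ := ha
      rw [hE0, Finset.mem_filter] at hy
      have hy' : r ≤ onesIn A y := hy.2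
      simp only [hZ, Finset.mem_filter] at hj
      obtain ⟨hjA, hjx, hjy⟩ := hj
      rw [Finset.mem_sigma]
      refine ⟨?_, ?_⟩
      · show Function.update y j true ∈ E1
        rw [hE1, Finset.mem_filter]
        refine ⟨Finset.mem_univ _, ?_⟩
        have h2 := onesIn_update_false A (Function.update y j true) hjA
          (Function.update_self _ _ _)
        have h3 : Function.update (Function.update y j true) j false = y := by
          rw [Function.update_idem, ← hjy, Function.update_eq_self]
        rw [h3] at h2
        show r + 1 ≤ onesIn A (Function.update y j true)
        omega
      · show j ∈ D (Function.update y j true)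
        simp only [hD, Finset.mem_filter]
        exact ⟨hjA, hjx, Function.update_self _ _ _⟩
    · rintro ⟨y, j⟩ ha
      rw [Finset.mem_sigma] at ha
      have hjy : y j = true := by
        have hj := ha.2
        simp only [hD, Finset.mem_filter] at hj
        exact hj.2.2
      have hupd : Function.update (Function.update y j false) j true = y := by
        rw [Function.update_idem, ← hjy, Function.update_eq_self]
      simp [hupd]
    · rintro ⟨y, j⟩ ha
      rw [Finset.mem_sigma] at ha
      have hjy : y j = false := by
        have hj := ha.2
        simp only [hZ, Finset.mem_filter] at hj
        exact hj.2.2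
      have hupd : Function.update (Function.update y j true) j false = y := by
        rw [Function.update_idem, ← hjy, Function.update_eq_self]
      simp [hupd]
    · rintro ⟨y, j⟩ ha
      dsimp only
      rw [Finset.mem_sigma] at ha
      have hj := ha.2
      simp only [hD, Finset.mem_filter] at hj
      have hjy : y j = true := hj.2.2
      have hjx : x j = false := hj.2.1
      have h := flip_eq c x y j (by rw [hjy, hjx]; exact Bool.noConfusion)
      rw [hjx] at h
      exact h
  -- step 3: bound card of Z by k
  have step3 : ∑ y ∈ E0, ((Z y).card : ℝ≥0∞) * (q * f y)
      ≤ ((A.filter fun j => x j = false).card : ℝ≥0∞) * q * ∑ y ∈ E0, f y := by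
    rw [mul_assoc, Finset.mul_sum, Finset.mul_sum]
    refine Finset.sum_le_sum fun y hy => ?_
    refine mul_le_mul_left (Nat.cast_le.2 ?_) _
    refine Finset.card_le_card (fun j hj => ?_)
    simp only [hZ, Finset.mem_filter] at hj
    exact Finset.mem_filter.2 ⟨hj.1, hj.2.1⟩
  exact le_trans step1 (le_trans (le_of_eq step2) step3)

end RJ

namespace RJ
open EA Finset

attribute [local instance] Classical.propDecidable

variable {n : ℕ}

lemma one_sub_ofReal {q : ℝ} (hq0 : 0 ≤ q) :
    (1 : ℝ≥0∞) - ENNReal.ofReal q = ENNReal.ofReal (1 - q) := by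
  rw [← ENNReal.ofReal_one]
  exact (ENNReal.ofReal_sub 1 hq0).symm

lemma step_div (c : ℝ) (A : Finset (Fin n)) (x : Pt n) (hc0 : 0 ≤ c / n)
    (hc1 : c / (n : ℝ) < 1) (r : ℕ) (hr : onesIn A x ≤ r) :
    ∑ y ∈ Finset.univ.filter (fun y : Pt n => r + 1 ≤ onesIn A y), (mutPMF n c x) y
      ≤ ENNReal.ofReal (((A.filter fun j => x j = false).card : ℝ) * (c / n)
            / (((r + 1 - onesIn A x : ℕ) : ℝ) * (1 - c / n))) *
        ∑ y ∈ Finset.univ.filter (fun y : Pt n => r ≤ onesIn A y), (mutPMF n c x) y := by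
  have hmin : min (ENNReal.ofReal (c / n)) 1 = ENNReal.ofReal (c / n) :=
    min_eq_left (ENNReal.ofReal_le_one.2 hc1.le)
  have h := inj_step c A x r hr
  rw [hmin] at h
  have hq1' : (0:ℝ) < 1 - c / n := by linarith
  have hd0 : (0:ℝ) < ((r + 1 - onesIn A x : ℕ) : ℝ) * (1 - c / n) := by
    have : 1 ≤ r + 1 - onesIn A x := by omega
    have : (1:ℝ) ≤ ((r + 1 - onesIn A x : ℕ) : ℝ) := by exact_mod_cast this
    nlinarith
  have hCd : ((r + 1 - onesIn A x : ℕ) : ℝ≥0∞) * (1 - ENNReal.ofReal (c / n))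
      = ENNReal.ofReal (((r + 1 - onesIn A x : ℕ) : ℝ) * (1 - c / n)) := by
    rw [one_sub_ofReal hc0, ← ENNReal.ofReal_natCast, ← ENNReal.ofReal_mul (by positivity)]
  have hKn : ((A.filter fun j => x j = false).card : ℝ≥0∞) * ENNReal.ofReal (c / n)
      = ENNReal.ofReal (((A.filter fun j => x j = false).card : ℝ) * (c / n)) := by
    rw [← ENNReal.ofReal_natCast, ← ENNReal.ofReal_mul (by positivity)]
  rw [hCd, hKn] at h
  have hdm : ∀ a b d : ℝ≥0∞, a / b * d = a * d / b := fun a b d => by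
    rw [div_eq_mul_inv, div_eq_mul_inv, mul_right_comm]
  rw [ENNReal.ofReal_div_of_pos hd0, hdm]
  rw [ENNReal.le_div_iff_mul_le (Or.inl ?_) (Or.inl ENNReal.ofReal_ne_top)]
  · rw [mul_comm] at h
    exact h
  · simp only [ne_eq, ENNReal.ofReal_eq_zero, not_le]
    exact hd0

lemma sum_all_le_one (c : ℝ) (x : Pt n) (E : Finset (Pt n)) :
    ∑ y ∈ E, (mutPMF n c x) y ≤ 1 := by
  have h1 : ∑ y : Pt n, (mutPMF n c x) y = 1 := by
    exact (tsum_fintype _).symm.trans (mutPMF n c x).tsum_coe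
  calc ∑ y ∈ E, (mutPMF n c x) y ≤ ∑ y : Pt n, (mutPMF n c x) y :=
        Finset.sum_le_sum_of_subset (Finset.subset_univ E)
    _ = 1 := h1

lemma chain (c : ℝ) (A : Finset (Fin n)) (x : Pt n) (hc0 : 0 ≤ c / n)
    (hc1 : c / (n : ℝ) < 1) (t : ℕ) :
    ∑ y ∈ Finset.univ.filter (fun y : Pt n => onesIn A x + t ≤ onesIn A y), (mutPMF n c x) y
      ≤ ENNReal.ofReal (∏ j ∈ Finset.range t,
          ((A.filter fun j => x j = false).card : ℝ) * (c / n) / (((j : ℝ) + 1) * (1 - c / n))) := by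
  induction t with
  | zero =>
    rw [Finset.prod_range_zero, ENNReal.ofReal_one]
    exact sum_all_le_one c x _
  | succ t ih =>
    have hstep := step_div c A x hc0 hc1 (onesIn A x + t) (Nat.le_add_right _ _)
    have hcast : ((onesIn A x + t + 1 - onesIn A x : ℕ) : ℝ) = (t : ℝ) + 1 := by
      have : onesIn A x + t + 1 - onesIn A x = t + 1 := by omega
      rw [this]; push_cast; ring
    rw [hcast] at hstep
    show ∑ y ∈ Finset.univ.filter (fun y : Pt n => onesIn A x + t + 1 ≤ onesIn A y),
        (mutPMF n c x) y ≤ _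
    calc ∑ y ∈ Finset.univ.filter (fun y : Pt n => onesIn A x + t + 1 ≤ onesIn A y),
          (mutPMF n c x) y
        ≤ _ := hstep
      _ ≤ ENNReal.ofReal (((A.filter fun j => x j = false).card : ℝ) * (c / n)
              / (((t : ℝ) + 1) * (1 - c / n))) *
            ENNReal.ofReal (∏ j ∈ Finset.range t,
              ((A.filter fun j => x j = false).card : ℝ) * (c / n)
                / (((j : ℝ) + 1) * (1 - c / n))) := by
          exact mul_le_mul_right ih _
      _ = _ := by
          have h10 : (0:ℝ) < 1 - c / n := by linarith
          rw [← ENNReal.ofReal_mul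
              (div_nonneg (by positivity) (mul_nonneg (by positivity) h10.le)),
            Finset.prod_range_succ, mul_comm]

end RJ

namespace RJ
open Finset

lemma F_le_half : ∀ m : ℕ, 1 ≤ m →
    ((Real.exp 1 / (2 * Real.exp 1 - 1) + m) / (2 * Real.exp 1 - 1)) ^ m
        / (m.factorial : ℝ) ≤ 1 / 2 := by
  have hE1 : (2.7182818283 : ℝ) < Real.exp 1 := Real.exp_one_gt_d9
  have hE2 : Real.exp 1 < 2.7182818286 := Real.exp_one_lt_d9
  set E : ℝ := Real.exp 1 with hE
  set D : ℝ := 2 * E - 1 with hD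
  have hD0 : (4.43 : ℝ) < D := by rw [hD]; linarith
  have hD1 : D < 4.44 := by rw [hD]; linarith
  set b : ℝ := E / D with hb
  have hb0 : 0 < b := by positivity
  have hbE : b * D = E := by rw [hb]; exact div_mul_cancel₀ E (by linarith : (0:ℝ) < D).ne'
  have hb1 : b < 1 := by
    rw [hb, div_lt_one (by linarith)]; linarith
  intro m hm
  induction m with
  | zero => omega
  | succ m ih =>
    rcases Nat.eq_or_lt_of_le hm with h1 | h1
    · -- base case m + 1 = 1
      have : m = 0 := by omega
      subst this
      have hgoal : ((b + ((0:ℕ) + 1 : ℕ)) / D) ^ (0 + 1) / (((0:ℕ)+1).factorial : ℝ)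
          = (b + 1) / D := by
        norm_num
      rw [hgoal, div_le_div_iff₀ (by linarith) (by norm_num)]
      nlinarith
    · have hm1 : 1 ≤ m := by omega
      have IH := ih hm1
      have hbm : (0:ℝ) < b + m := by
        have : (1:ℝ) ≤ (m:ℝ) := by exact_mod_cast hm1
        linarith
      -- key inequality
      have key2 : (1 + 1/(b + m)) ^ m ≤ E := by
        have h1' : 1 + 1/(b + m) ≤ Real.exp (1/(b + m)) := by
          have := Real.add_one_le_exp (1/(b + m))
          linarith
        calc (1 + 1/(b + m)) ^ m ≤ (Real.exp (1/(b + m))) ^ m := by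
              apply pow_le_pow_left₀ (by positivity) h1'
          _ = Real.exp ((m : ℝ) * (1/(b + m))) := (Real.exp_nat_mul _ m).symm
          _ ≤ E := by
              rw [hE]
              apply Real.exp_le_exp.2
              rw [mul_one_div, div_le_one hbm]
              linarith
      have key3 : E * (b + m + 1) ≤ ((m:ℝ) + 1) * D := by
        have hmR : (1:ℝ) ≤ (m:ℝ) := by exact_mod_cast hm1
        nlinarith [hbE]
      have key1 : (b + m + 1) ^ (m + 1) ≤ (b + m) ^ m * (((m:ℝ) + 1) * D) := by
        have e1 : b + m + 1 = (b + m) * (1 + 1/(b + m)) := by field_simp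
        calc (b + m + 1) ^ (m + 1) = (b + m + 1) ^ m * (b + m + 1) := pow_succ _ _
          _ = (b + m) ^ m * (1 + 1/(b + m)) ^ m * (b + m + 1) := by
              rw [e1, mul_pow]
          _ ≤ (b + m) ^ m * E * (b + m + 1) := by
              have h0 : (0:ℝ) ≤ (b + m) ^ m := by positivity
              have h1' : (0:ℝ) ≤ b + m + 1 := by linarith
              exact mul_le_mul_of_nonneg_right (mul_le_mul_of_nonneg_left key2 h0) h1'
          _ ≤ (b + m) ^ m * (((m:ℝ) + 1) * D) := by
              have h0 : (0:ℝ) ≤ (b + m) ^ m := by positivity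
              rw [mul_assoc]
              exact mul_le_mul_of_nonneg_left key3 h0
      -- conclude the step
      have hfac : (0:ℝ) < (m.factorial : ℝ) := by exact_mod_cast m.factorial_pos
      have hstep : ((b + (m + 1 : ℕ)) / D) ^ (m + 1) / ((m+1).factorial : ℝ)
          ≤ ((b + m) / D) ^ m / (m.factorial : ℝ) := by
        have hc : ((b + (m + 1 : ℕ)) : ℝ) = b + m + 1 := by push_cast; ring
        rw [hc, div_pow, div_pow, div_div, div_div]
        rw [div_le_div_iff₀ (by positivity) (by positivity)]
        have hx : (0:ℝ) ≤ D ^ m * (m.factorial : ℝ) := by positivity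
        calc (b + m + 1) ^ (m + 1) * (D ^ m * (m.factorial : ℝ))
            ≤ ((b + m) ^ m * (((m:ℝ) + 1) * D)) * (D ^ m * (m.factorial : ℝ)) :=
              mul_le_mul_of_nonneg_right key1 hx
          _ = (b + m) ^ m * (D ^ (m + 1) * ((m+1).factorial : ℝ)) := by
              push_cast [Nat.factorial_succ, pow_succ]
              ring
      exact le_trans hstep IH

lemma prod_form (X d : ℝ) (m : ℕ) :
    ∏ j ∈ Finset.range m, X / (((j:ℝ) + 1) * d) = (X / d) ^ m / (m.factorial : ℝ) := by
  have h1 : ∀ j ∈ Finset.range m, X / (((j:ℝ) + 1) * d) = (X / d) / ((j:ℝ) + 1) := by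
    intro j _
    rw [div_div, mul_comm]
  rw [Finset.prod_congr rfl h1, Finset.prod_div_distrib, Finset.prod_const,
    Finset.card_range]
  congr 1
  rw [← Finset.prod_range_add_one_eq_factorial]
  push_cast
  rfl

set_option maxHeartbeats 1000000 in
lemma analytic (m : ℕ) (hm : 1 ≤ m) (β kR q : ℝ) (hβ : 0 < β)
    (hq0 : 0 < q) (hq : q ≤ 1 / (2 * Real.exp 1)) (hk0 : 0 ≤ kR) (hk : kR ≤ β + m)
    (hbad : 2 * β * ((m:ℝ) + 1) * (1 - q) < kR) :
    (kR * q / (1 - q)) ^ m / (m.factorial : ℝ) ≤ (2:ℝ) ^ (-β) := by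
  have hE1 : (2.7182818283 : ℝ) < Real.exp 1 := Real.exp_one_gt_d9
  have hE2 : Real.exp 1 < 2.7182818286 := Real.exp_one_lt_d9
  set E : ℝ := Real.exp 1 with hE
  clear_value E
  have hmR : (1:ℝ) ≤ (m:ℝ) := by exact_mod_cast hm
  have hq1 : q < 1 := by
    have : 1 / (2 * E) < 1 := by rw [div_lt_one (by linarith)]; linarith
    linarith
  have h1q : (0:ℝ) < 1 - q := by linarith
  -- bound on β
  have hqE : 2 * E * q ≤ 1 := by
    rw [div_eq_mul_inv] at hq
    have h2E : (0:ℝ) < 2 * E := by linarith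
    calc 2 * E * q ≤ 2 * E * (1 * (2 * E)⁻¹) := by
          apply mul_le_mul_of_nonneg_left hq (by linarith)
      _ = 1 := by field_simp
  have h1qE : 1 - 1/(2*E) ≤ 1 - q := by
    have : q ≤ 1/(2*E) := hq
    linarith
  have hchain : 2 * β * ((m:ℝ) + 1) * (1 - 1/(2*E)) < β + (m:ℝ) := by
    have h0 : (0:ℝ) ≤ 2 * β * ((m:ℝ) + 1) := by positivity
    nlinarith [mul_le_mul_of_nonneg_left h1qE h0]
  have hEpos : (0:ℝ) < E := by linarith
  have hg : (1:ℝ) < 2 - 1/E := by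
    have : 1/E < 1 := by rw [div_lt_one (by linarith)]; linarith
    linarith
  have hfold : 2 * ((m:ℝ)+1) * (1 - 1/(2*E)) = (2 - 1/E) * ((m:ℝ)+1) := by
    field_simp
  have hβg : β * (2 - 1/E) < 1 := by
    by_contra hcon
    push_neg at hcon
    have e1 : β * (2 - 1/E) * ((m:ℝ)+1) < β + m := by nlinarith [hchain]
    nlinarith [mul_le_mul_of_nonneg_right hcon (by linarith : (0:ℝ) ≤ (m:ℝ))]
  have hβ1 : β < 1 := by nlinarith
  have hβb : β ≤ E / (2*E - 1) := by
    rw [le_div_iff₀ (by linarith)]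
    have hexp : β * (2 - 1/E) * E = β * (2*E - 1) := by
      field_simp
    nlinarith [mul_lt_mul_of_pos_right hβg hEpos, hexp]
  -- RHS lower bound
  have hrhs : (1:ℝ)/2 ≤ (2:ℝ) ^ (-β) := by
    have h := (Real.rpow_le_rpow_left_iff (x := 2) (by norm_num)).2
      (show -(1:ℝ) ≤ -β by linarith)
    rw [Real.rpow_neg_one] at h
    calc (1:ℝ)/2 = (2:ℝ)⁻¹ := by norm_num
      _ ≤ _ := h
  -- LHS upper bound
  have hs : q / (1 - q) ≤ 1 / (2*E - 1) := by
    rw [div_le_div_iff₀ h1q (by linarith)]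
    nlinarith [hqE]
  have hbase : kR * q / (1 - q) ≤ (E/(2*E-1) + m) / (2*E - 1) := by
    have h1 : kR * q / (1 - q) = kR * (q / (1 - q)) := by ring
    rw [h1]
    calc kR * (q / (1 - q)) ≤ (β + m) * (1 / (2*E - 1)) := by
          apply mul_le_mul hk hs (div_nonneg hq0.le h1q.le) (by linarith)
      _ ≤ (E/(2*E-1) + m) * (1 / (2*E - 1)) := by
          have hDpos : (0:ℝ) < 2*E - 1 := by linarith
          apply mul_le_mul_of_nonneg_right (by linarith) (one_div_nonneg.2 hDpos.le)
      _ = (E/(2*E-1) + m) / (2*E - 1) := by ring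
  have hlhs : (kR * q / (1 - q)) ^ m / (m.factorial : ℝ)
      ≤ ((E/(2*E-1) + m) / (2*E - 1)) ^ m / (m.factorial : ℝ) := by
    have hfpos : (0:ℝ) < (m.factorial : ℝ) := by exact_mod_cast m.factorial_pos
    have h1 : (kR * q / (1 - q)) ^ m ≤ ((E/(2*E-1) + m) / (2*E - 1)) ^ m :=
      pow_le_pow_left₀ (div_nonneg (mul_nonneg hk0 hq0.le) h1q.le) hbase m
    exact by gcongr
  calc (kR * q / (1 - q)) ^ m / (m.factorial : ℝ)
      ≤ ((E/(2*E-1) + m) / (2*E - 1)) ^ m / (m.factorial : ℝ) := hlhs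
    _ ≤ 1/2 := by rw [hE]; exact F_le_half m hm
    _ ≤ (2:ℝ) ^ (-β) := hrhs

end RJ

namespace RJ
open EA Finset

attribute [local instance] Classical.propDecidable

lemma toMeasure_ge_eq_sum {n : ℕ} (c : ℝ) (x : Pt n) (A : Finset (Fin n)) (r : ℕ) :
    (mutPMF n c x).toMeasure {y : Pt n | r ≤ onesIn A y}
      = ∑ y ∈ Finset.univ.filter (fun y : Pt n => r ≤ onesIn A y), (mutPMF n c x) y := by
  rw [PMF.toMeasure_apply _ ((Set.toFinite _).measurableSet), tsum_fintype,
    Finset.sum_filter]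
  refine Finset.sum_congr rfl fun y _ => ?_
  rw [Set.indicator_apply]
  by_cases h : r ≤ onesIn A y
  · rw [if_pos h, if_pos (show y ∈ {y : Pt n | r ≤ onesIn A y} from h)]
  · rw [if_neg h, if_neg (show y ∉ {y : Pt n | r ≤ onesIn A y} from h)]

lemma onesIn_add_zeros {n : ℕ} (A : Finset (Fin n)) (x : Pt n) :
    onesIn A x + (A.filter fun j => x j = false).card = A.card := by
  have h1 : onesIn A x = (A.filter fun j => x j = true).card := by
    unfold onesIn
    congr 1
  rw [h1]
  have h2 : (A.filter fun j => x j = false) = (A.filter fun j => ¬ (x j = true)) := by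
    apply Finset.filter_congr
    intro j _
    simp
  rw [h2]
  exact Finset.card_filter_add_card_filter_not (fun j => x j = true)

end RJ
/-- Let `α, c > 0`, `A ⊆ [n]` with `|A| = αn`, `x ∈ {0,1}ⁿ`. Let
`(1-ε')αn ≤ i ≤ αn` with `0 < ε' < 1` and `ε'n ≥ 2ec`. With `rk z = |{j ∈ A : z_j = 1}|` and
`y` obtained from `x` by standard bit mutation with rate `c/n`: if `rk x < i`, then
`Pr[rk y ≥ i] ≤ 2^{-ε'αn}` or `Pr[rk y ≥ i+1] ≤ 2ε'αc · Pr[rk y ≥ i]`. -/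
theorem rank_jump_alternative (α c ε' : ℝ) (hα : 0 < α) (hc : 0 < c)
    (n : ℕ) (A : Finset (Fin n)) (hA : (A.card : ℝ) = α * n)
    (hε0 : 0 < ε') (hε1 : ε' < 1) (hεn : 2 * Real.exp 1 * c ≤ ε' * n)
    (i : ℕ) (hi1 : (1 - ε') * α * n ≤ (i : ℝ)) (hi2 : (i : ℝ) ≤ α * n)
    (x : EA.Pt n) (hx : EA.onesIn A x < i) :
    (EA.mutPMF n c x).toMeasure {y | i ≤ EA.onesIn A y} ≤
        ENNReal.ofReal ((2 : ℝ) ^ (-(ε' * α * n))) ∨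
      (EA.mutPMF n c x).toMeasure {y | i + 1 ≤ EA.onesIn A y} ≤
        ENNReal.ofReal (2 * ε' * α * c) *
          (EA.mutPMF n c x).toMeasure {y | i ≤ EA.onesIn A y} := by
  classical
  have hE1 : (2.7182818283:ℝ) < Real.exp 1 := Real.exp_one_gt_d9
  have hi0 : 1 ≤ i := by omega
  have hn : 0 < n := by
    rcases Nat.eq_zero_or_pos n with h | h
    · exfalso
      subst h
      have h1 : (i:ℝ) ≤ 0 := by simpa using hi2
      have h2 : (1:ℝ) ≤ (i:ℝ) := by exact_mod_cast hi0
      linarith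
    · exact h
  have hnR : (0:ℝ) < (n:ℝ) := by exact_mod_cast hn
  have hq0 : 0 < c / (n:ℝ) := div_pos hc hnR
  have hqle : c / (n:ℝ) ≤ 1 / (2 * Real.exp 1) := by
    rw [div_le_div_iff₀ hnR (by linarith)]
    nlinarith [hεn, hε1, hc, hnR]
  have hq1 : c / (n:ℝ) < 1 := by
    have h2 : 1 / (2 * Real.exp 1) < 1 := by
      rw [div_lt_one (by linarith)]
      linarith
    linarith
  have h1q : (0:ℝ) < 1 - c / (n:ℝ) := by linarith
  set a : ℕ := EA.onesIn A x with ha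
  set m : ℕ := i - a with hmdef
  have hm1 : 1 ≤ m := by omega
  have hiam : i = a + m := by omega
  have hiamR : (i:ℝ) = (a:ℝ) + (m:ℝ) := by exact_mod_cast hiam
  set k : ℕ := (A.filter fun j => x j = false).card with hk
  have hkval : (k:ℝ) = α * n - (a:ℝ) := by
    have hu : (A.filter fun j => x j = true) ∪ (A.filter fun j => x j = false) = A := by
      ext j
      simp only [Finset.mem_union, Finset.mem_filter]
      constructor
      · rintro (⟨h, _⟩ | ⟨h, _⟩) <;> exact h
      · intro hj
        cases hxj : x j
        · exact Or.inr ⟨hj, rfl⟩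
        · exact Or.inl ⟨hj, rfl⟩
    have hd : Disjoint (A.filter fun j => x j = true) (A.filter fun j => x j = false) := by
      rw [Finset.disjoint_left]
      intro j h1 h2
      rw [Finset.mem_filter] at h1 h2
      rw [h1.2] at h2
      exact Bool.noConfusion h2.2
    have hcard : a + k = A.card := by
      rw [ha, hk]
      exact RJ.onesIn_add_zeros A x
    have : ((a + k : ℕ) : ℝ) = α * n := by rw [hcard, hA]
    push_cast at this
    linarith
  have hk_le : (k:ℝ) ≤ ε' * α * n + (m:ℝ) := by
    have h1 : α * n - (i:ℝ) ≤ ε' * α * n := by nlinarith [hi1]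
    rw [hkval]
    rw [hiamR] at h1
    linarith
  have hms : ∀ r : ℕ, (EA.mutPMF n c x).toMeasure {y : EA.Pt n | r ≤ EA.onesIn A y}
      = ∑ y ∈ Finset.univ.filter (fun y : EA.Pt n => r ≤ EA.onesIn A y),
          (EA.mutPMF n c x) y := fun r => RJ.toMeasure_ge_eq_sum c x A r
  by_cases hcase : (k:ℝ) * (c / n) / (((m:ℝ) + 1) * (1 - c / n)) ≤ 2 * ε' * α * c
  · right
    rw [hms i, hms (i + 1)]
    have hstep := RJ.step_div c A x hq0.le hq1 i (le_of_lt hx)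
    have hc1 : ((i + 1 - a : ℕ) : ℝ) = (m:ℝ) + 1 := by
      have h : i + 1 - a = m + 1 := by omega
      rw [h]
      push_cast
      ring
    rw [hc1] at hstep
    exact le_trans hstep (mul_le_mul_left (ENNReal.ofReal_le_ofReal hcase) _)
  · left
    rw [hms i]
    push_neg at hcase
    have hβ : (0:ℝ) < ε' * α * n := by positivity
    have hbad : 2 * (ε' * α * n) * ((m:ℝ) + 1) * (1 - c / n) < (k:ℝ) := by
      have hm1q : (0:ℝ) < ((m:ℝ) + 1) * (1 - c / n) :=
        mul_pos (by positivity) h1q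
      have h3 := (lt_div_iff₀ hm1q).1 hcase
      have hcq : c = (c / n) * n := by field_simp
      have h4 : (2 * (ε' * α * n) * ((m:ℝ) + 1) * (1 - c / n)) * (c / n) < (k:ℝ) * (c / n) := by
        calc (2 * (ε' * α * n) * ((m:ℝ) + 1) * (1 - c / n)) * (c / n)
            = 2 * ε' * α * ((c / n) * n) * (((m:ℝ) + 1) * (1 - c / n)) := by ring
          _ = 2 * ε' * α * c * (((m:ℝ) + 1) * (1 - c / n)) := by rw [← hcq]
          _ < (k:ℝ) * (c / n) := h3
      exact lt_of_mul_lt_mul_right h4 hq0.le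
    have hchain := RJ.chain c A x hq0.le hq1 m
    have hieq : EA.onesIn A x + m = i := by omega
    rw [hieq] at hchain
    refine le_trans hchain (ENNReal.ofReal_le_ofReal ?_)
    rw [RJ.prod_form ((k:ℝ) * (c / n)) (1 - c / n) m]
    exact RJ.analytic m hm1 (ε' * α * n) (k:ℝ) (c / n) hβ hq0 hqle
      (Nat.cast_nonneg k) hk_le hbad
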